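/- Along any nonnegative solution of the system, the function Z(t) = (1 + m_s Y_{B/s}/k_d)·X(t) + α·B(t) + α·Y_{B/s}·s(t) satisfies dZ/dt = K_H·[(α Y_{B/s} - 1) - m_s Y_{B/s}/k_d]·X(t), and in particular Z is nonincreasing. -/

import Mathlib

/-- Along nonnegative solutions, `Z = (1 + m_s Y_{B/s}/k_d) X + α B + α Y_{B/s} s`
satisfies `dZ/dt = K_H ((α Y_{B/s} - 1) - m_s Y_{B/s}/k_d) X`, and `Z` is
nonincreasing. -/
theorem stmt_8 (μ : ℝ → ℝ) (KH α kd YB ms : ℝ) (X B S : ℝ → ℝ)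
    (hKH : 0 < KH) (hα0 : 0 ≤ α) (hα1 : α < 1) (hkd : 0 < kd)
    (hYB : 0 < YB) (hYB1 : YB < 1) (hms : 0 < ms)
    (hpos : ∀ t, 0 ≤ t → 0 ≤ X t ∧ 0 ≤ B t ∧ 0 ≤ S t)
    (hODE : ∀ t, 0 ≤ t →
      HasDerivAt X (-KH * X t + α * kd * B t) t ∧
      HasDerivAt B ((μ (S t) - kd) * B t) t ∧
      HasDerivAt S (-(μ (S t) / YB + ms) * B t + KH * X t) t) :
    (∀ t, 0 ≤ t →
      HasDerivAt (fun τ => (1 + ms * YB / kd) * X τ + α * B τ + α * YB * S τ)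
        (KH * ((α * YB - 1) - ms * YB / kd) * X t) t) ∧
    (∀ t₁ t₂, 0 ≤ t₁ → t₁ ≤ t₂ →
      (1 + ms * YB / kd) * X t₂ + α * B t₂ + α * YB * S t₂ ≤
        (1 + ms * YB / kd) * X t₁ + α * B t₁ + α * YB * S t₁) := by
  have hZ : ∀ t, 0 ≤ t →
      HasDerivAt (fun τ => (1 + ms * YB / kd) * X τ + α * B τ + α * YB * S τ)
        (KH * ((α * YB - 1) - ms * YB / kd) * X t) t := by
    intro t ht
    obtain ⟨hX, hB, hS⟩ := hODE t ht
    have := ((hX.const_mul (1 + ms * YB / kd)).add (hB.const_mul α)).add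
      (hS.const_mul (α * YB))
    convert this using 1
    · rfl
    · rfl
    · rfl
    field_simp
    ring
  refine ⟨hZ, fun t₁ t₂ ht₁ h12 => ?_⟩
  set Z : ℝ → ℝ := fun τ => (1 + ms * YB / kd) * X τ + α * B τ + α * YB * S τ
  have hanti : AntitoneOn Z (Set.Ici 0) := by
    apply antitoneOn_of_deriv_nonpos (convex_Ici 0)
    · exact fun t ht => (hZ t ht).continuousAt.continuousWithinAt
    · intro t ht
      rw [interior_Ici] at ht
      exact (hZ t (le_of_lt ht)).differentiableAt.differentiableWithinAt
    · intro t ht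
      rw [interior_Ici] at ht
      rw [(hZ t ht.le).deriv]
      have hXt := (hpos t ht.le).1
      have hc : (α * YB - 1) - ms * YB / kd < 0 := by
        have h1 : α * YB < 1 := by
          calc α * YB ≤ 1 * YB := by nlinarith
          _ < 1 := by linarith
        have h2 : 0 < ms * YB / kd := by positivity
        linarith
      have h3 : KH * ((α * YB - 1) - ms * YB / kd) ≤ 0 := by nlinarith
      exact mul_nonpos_of_nonpos_of_nonneg h3 hXt
  exact hanti ht₁ (le_trans ht₁ h12) h12
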